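/- arXiv:2505.10809 — 2 statements merged into one kernel-verified Lean document; each statement's English description precedes it below -/
import Mathlib

section
/- Let C and D be pointed categories admitting finite limits and finite colimits, let n ≥ 0, and let F : C ⥤ D be a functor preserving the zero object which admits a right adjoint F* : D ⥤ C. If the identity functor of D is n-excisive, then both F : C ⥤ D and F* : D ⥤ C are n-excisive functors. -/
open CategoryTheory CategoryTheory.Limits

universe v u v' u'

variable {σ : Type} {C : Type u} [Category.{v} C]

/-- The canonical cone with vertex `X ∅` over the restriction of the `S`-cube `X`
to the poset of nonempty subsets of `S`. -/
def cartesianCone (X : Finset σ ⥤ C) :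
    Cone (ObjectProperty.ι (fun T : Finset σ => T.Nonempty : ObjectProperty (Finset σ)) ⋙ X) where
  pt := X.obj ∅
  π :=
    { app := fun T => X.map (homOfLE (Finset.empty_subset T.obj))
      naturality := fun T T' f => by
        dsimp
        rw [Category.id_comp, ← X.map_comp]
        rfl }

/-- An `S`-cube is Cartesian if the canonical cone with vertex `X ∅` over its restriction
to nonempty subsets is a limit cone. -/
def IsCartesianCube (X : Finset σ ⥤ C) : Prop :=
  Nonempty (IsLimit (cartesianCone X))

/-- The canonical cocone with vertex `X T` over the restriction of the `S`-cube `X`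
to the poset of subsets of `T` having at most one element. -/
def cubeCocone (X : Finset σ ⥤ C) (T : Finset σ) :
    Cocone (ObjectProperty.ι
      (fun T' : Finset σ => T'.card ≤ 1 ∧ T' ⊆ T : ObjectProperty (Finset σ)) ⋙ X) where
  pt := X.obj T
  ι :=
    { app := fun T' => X.map (homOfLE T'.property.2)
      naturality := fun T' T'' f => by
        dsimp
        rw [Category.comp_id, ← X.map_comp]
        rfl }

/-- An `S`-cube `X` is strongly coCartesian if it is a pointwise left Kan extension of its
restriction to the poset `P_{≤1}(S)` of subsets having at most one element: i.e. for every
`T ⊆ S`, the canonical cocone with vertex `X T` over the restriction of `X` to subsets of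
`T` with at most one element is a colimit cocone. -/
def IsStronglyCoCartesian (X : Finset σ ⥤ C) : Prop :=
  ∀ T : Finset σ, Nonempty (IsColimit (cubeCocone X T))

/-- A functor `F : C ⥤ D` is `n`-excisive if for every finite set `S` with exactly `n + 1`
elements, `F` sends strongly coCartesian `S`-cubes of `C` to Cartesian `S`-cubes of `D`. -/
def IsExcisive {D : Type u'} [Category.{v'} D] (n : ℕ) (F : C ⥤ D) : Prop :=
  ∀ (σ : Type) [Fintype σ], Fintype.card σ = n + 1 →
    ∀ X : Finset σ ⥤ C, IsStronglyCoCartesian X → IsCartesianCube (X ⋙ F)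

lemma isStronglyCoCartesian_comp {D : Type u'} [Category.{v'} D] {X : Finset σ ⥤ C}
    (F : C ⥤ D) [PreservesColimitsOfSize.{0, 0} F]
    (hX : IsStronglyCoCartesian X) : IsStronglyCoCartesian (X ⋙ F) := by
  intro T
  refine ⟨IsColimit.ofIsoColimit (isColimitOfPreserves F (hX T).some)
    (Cocones.ext (Iso.refl _) ?_)⟩
  intro T'
  simp [cubeCocone]

lemma isCartesianCube_comp {D : Type u'} [Category.{v'} D] {X : Finset σ ⥤ C}
    (G : C ⥤ D) [PreservesLimitsOfSize.{0, 0} G]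
    (hX : IsCartesianCube X) : IsCartesianCube (X ⋙ G) := by
  refine ⟨IsLimit.ofIsoLimit (isLimitOfPreserves G hX.some)
    (Cones.ext (Iso.refl _) ?_)⟩
  intro T'
  simp [cartesianCone]

/-- Let `C`, `D` be pointed categories with finite limits and colimits,
`n ≥ 0`, and `F : C ⥤ D` a functor preserving the zero object admitting a right adjoint
`G : D ⥤ C`. If the identity functor of `D` is `n`-excisive, then both `F` and `G` are
`n`-excisive functors. -/
theorem excisive_of_adjoint {C : Type u} [Category.{v} C] {D : Type u'} [Category.{v'} D]
    [HasZeroObject C] [HasFiniteLimits C] [HasFiniteColimits C]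
    [HasZeroObject D] [HasFiniteLimits D] [HasFiniteColimits D]
    (n : ℕ) (F : C ⥤ D) (G : D ⥤ C) (adj : F ⊣ G)
    (hF : ∀ X : C, IsZero X → IsZero (F.obj X))
    (hD : IsExcisive n (𝟭 D)) :
    IsExcisive n F ∧ IsExcisive n G := by
  have hFc : PreservesColimitsOfSize.{0, 0} F := adj.leftAdjoint_preservesColimits
  have hGl : PreservesLimitsOfSize.{0, 0} G := adj.rightAdjoint_preservesLimits
  constructor
  · intro σ _ hσ X hX
    have := hD σ hσ (X ⋙ F) (isStronglyCoCartesian_comp F hX)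
    rwa [Functor.comp_id] at this
  · intro σ _ hσ X hX
    have := hD σ hσ X hX
    rw [Functor.comp_id] at this
    exact isCartesianCube_comp G this
end

section
/- Let C be a category, D a category with finite limits, F : C ⥤ D a functor, S a finite set, X : P(S) ⥤ C any S-cube, and S' ⊆ S a nonempty subset. Then the S-cube I ↦ F(X(I ∪ S')) (with structure maps induced by inclusions of subsets) is a Cartesian S-cube of D. -/
open CategoryTheory CategoryTheory.Limits

universe v u v' u'

variable {σ : Type} {C : Type u} [Category.{v} C]

/-- For a subset `S' ⊆ S`, the monotone map `I ↦ I ∪ S'` on subsets of `S`. -/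
def unionRightMonotone [DecidableEq σ] (S' : Finset σ) :
    Monotone (fun I : Finset σ => I ∪ S') :=
  fun _ _ h => Finset.union_subset_union h (Finset.Subset.refl S')

/-- Let `C` be a category, `D` a category with finite limits,
`F : C ⥤ D` a functor, `S` a finite set, `X : P(S) ⥤ C` any `S`-cube and `S' ⊆ S` a
nonempty subset. Then the `S`-cube `I ↦ F (X (I ∪ S'))` is a Cartesian `S`-cube of `D`. -/
theorem cartesian_of_union_nonempty {σ : Type} [Fintype σ] [DecidableEq σ]
    {C : Type u} [Category.{v} C] {D : Type u'} [Category.{v'} D] [HasFiniteLimits D]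
    (F : C ⥤ D) (X : Finset σ ⥤ C) (S' : Finset σ) (hS' : S'.Nonempty) :
    IsCartesianCube ((unionRightMonotone S').functor ⋙ X ⋙ F) := by
  have hsub : ∀ {A B : Finset σ} (f g : A ⟶ B), f = g := fun f g => Subsingleton.elim f g
  have hid : ∀ {A : Finset σ} (f : A ⟶ A), X.map f = 𝟙 (X.obj A) := fun f => by
    rw [hsub f (𝟙 _), X.map_id]
  refine ⟨⟨fun s => s.π.app ⟨S', hS'⟩ ≫
      F.map (X.map (homOfLE (le_of_eq (by simp)))), ?_, ?_⟩⟩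
  · intro s T
    have hUne : (S' ∪ T.obj).Nonempty := hS'.mono Finset.subset_union_left
    have w1 := s.w (show (⟨S', hS'⟩ : ObjectProperty.FullSubcategory fun T : Finset σ => T.Nonempty) ⟶
      ⟨S' ∪ T.obj, hUne⟩ from ⟨homOfLE Finset.subset_union_left⟩)
    have w2 := s.w (show T ⟶ (⟨S' ∪ T.obj, hUne⟩ :
      ObjectProperty.FullSubcategory fun T : Finset σ => T.Nonempty) from ⟨homOfLE Finset.subset_union_right⟩)
    have hr : (S' ∪ T.obj) ∪ S' ≤ T.obj ∪ S' := by
      intro x hx; simp only [Finset.mem_union] at hx ⊢; tauto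
    dsimp [cartesianCone, unionRightMonotone, Monotone.functor,
      inducedFunctor] at w1 w2 ⊢
    have h2 : s.π.app T = s.π.app ⟨S' ∪ T.obj, hUne⟩ ≫ F.map (X.map (homOfLE hr)) := by
      erw [← w2, Category.assoc, ← F.map_comp, ← X.map_comp, hid, F.map_id, Category.comp_id]
    erw [h2, ← w1, Category.assoc, Category.assoc]
    congr 1
    erw [← F.map_comp, ← F.map_comp, ← X.map_comp, ← X.map_comp]
    exact congrArg F.map (congrArg X.map (hsub _ _))
  · intro s m hm
    have h := hm ⟨S', hS'⟩
    dsimp [cartesianCone, unionRightMonotone, Monotone.functor,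
      inducedFunctor] at h ⊢
    erw [← h, Category.assoc, ← F.map_comp, ← X.map_comp, hid, F.map_id, Category.comp_id]
end
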